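/- For every n ∈ ℕ and every z ∈ ℂ with Im z > 0: 2·∫_{−2}^{2} U_n(y/2)/(z − y)·ρ_sc(y) dy = 2·((z − √(z²−4))/2)^{n+1}. -/

import Mathlib

open MeasureTheory Real Filter Set

noncomputable section

/-- The semicircle density. -/
def rhoSC (x : ℝ) : ℝ :=
  if x ∈ Set.Ioo (-2 : ℝ) 2 then Real.sqrt (4 - x ^ 2) / (2 * Real.pi) else 0

/-- `√(z²−4) := √(z−2)·√(z+2)` with principal square roots (branch cut `[−2,2]`). -/
def sqrtD (z : ℂ) : ℂ := (z - 2) ^ ((1 : ℂ) / 2) * (z + 2) ^ ((1 : ℂ) / 2)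

namespace SemicircleAux

/-- the "small" branch root -/
def wz (z : ℂ) : ℂ := (z - sqrtD z) / 2

lemma sq_half_cpow (x : ℂ) : (x ^ ((1:ℂ)/2)) ^ 2 = x := by
  have h := Complex.cpow_nat_inv_pow x (n := 2) two_ne_zero
  have h2 : ((1:ℂ)/2) = ((2:ℕ) : ℂ)⁻¹ := by norm_num
  rw [h2]
  exact_mod_cast h

lemma sqrtD_sq (z : ℂ) : (sqrtD z) ^ 2 = z ^ 2 - 4 := by
  unfold sqrtD
  rw [mul_pow, sq_half_cpow, sq_half_cpow]
  ring

lemma half_cpow_re_pos {x : ℂ} (hx : 0 < x.im) : 0 < (x ^ ((1:ℂ)/2)).re := by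
  rw [one_div, Complex.cpow_inv_two_re]
  apply Real.sqrt_pos.mpr
  have h1 : |x.re| < ‖x‖ := Complex.abs_re_lt_norm.mpr (by simp [hx.ne'])
  have := abs_lt.mp h1
  linarith [this.1]

lemma half_cpow_im_pos {x : ℂ} (hx : 0 < x.im) : 0 < (x ^ ((1:ℂ)/2)).im := by
  rw [one_div, Complex.cpow_inv_two_im_eq_sqrt hx.le]
  apply Real.sqrt_pos.mpr
  have h1 : |x.re| < ‖x‖ := Complex.abs_re_lt_norm.mpr (by simp [hx.ne'])
  have := abs_lt.mp h1
  linarith [this.2]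

lemma sqrtD_im_pos {z : ℂ} (hz : 0 < z.im) : 0 < (sqrtD z).im := by
  have h1 : 0 < (z - 2).im := by simp [hz]
  have h2 : 0 < (z + 2).im := by simp [hz]
  unfold sqrtD
  rw [Complex.mul_im]
  have := half_cpow_re_pos h1; have := half_cpow_im_pos h1
  have := half_cpow_re_pos h2; have := half_cpow_im_pos h2
  positivity

lemma wz_mul (z : ℂ) : wz z * ((z + sqrtD z) / 2) = 1 := by
  have h := sqrtD_sq z
  unfold wz
  field_simp
  linear_combination -h

lemma wz_quadratic (z : ℂ) : wz z ^ 2 + 1 = z * wz z := by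
  have h := sqrtD_sq z
  unfold wz
  field_simp
  linear_combination h

lemma abs_wz_lt_one {z : ℂ} (hz : 0 < z.im) : ‖wz z‖ < 1 := by
  set s := sqrtD z with hs
  have him : 0 < s.im := sqrtD_im_pos hz
  have hsq := sqrtD_sq z
  have hprod : s.re * s.im = z.re * z.im := by
    have h2 := congrArg Complex.im hsq
    simp only [pow_two, Complex.mul_im, Complex.sub_im] at h2
    norm_num at h2
    linarith
  have hR : 0 < z.re * s.re + z.im * s.im := by
    by_contra hneg
    push_neg at hneg
    have hyv := mul_pos hz him
    have k1 : (z.re*s.re)*(z.im*s.im) = (s.re*s.im)^2 := by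
      linear_combination (-(s.re*s.im))*hprod
    have h3 : z.re*s.re ≤ -(z.im*s.im) := by linarith
    have h4 : (z.re*s.re)*(z.im*s.im) ≤ (-(z.im*s.im))*(z.im*s.im) :=
      mul_le_mul_of_nonneg_right h3 hyv.le
    nlinarith [sq_nonneg (s.re*s.im)]
  have habs : ‖z - s‖ < ‖z + s‖ := by
    apply lt_of_pow_lt_pow_left₀ 2 (norm_nonneg _)
    rw [Complex.sq_norm, Complex.sq_norm, Complex.normSq_apply, Complex.normSq_apply]
    simp only [Complex.sub_re, Complex.sub_im, Complex.add_re, Complex.add_im]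
    nlinarith
  have hmul : ‖wz z‖ * ‖(z + s)/2‖ = 1 := by
    rw [← norm_mul, wz_mul z]; simp
  have hlt : ‖wz z‖ < ‖(z + s)/2‖ := by
    unfold wz
    rw [norm_div, norm_div]
    have h2 : ‖(2:ℂ)‖ = 2 := by norm_num
    rw [h2]
    linarith
  by_contra hc
  push_neg at hc
  nlinarith [hlt, hmul, hc]

lemma abs_sin_nat_mul (k : ℕ) (θ : ℝ) : |Real.sin (k * θ)| ≤ k * |Real.sin θ| := by
  induction k with
  | zero => simp
  | succ k ih =>
    have : ((k:ℝ)+1) * θ = k * θ + θ := by ring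
    push_cast
    rw [this, Real.sin_add]
    calc |Real.sin (k*θ) * Real.cos θ + Real.cos (k*θ) * Real.sin θ|
        ≤ |Real.sin (k*θ) * Real.cos θ| + |Real.cos (k*θ) * Real.sin θ| := abs_add_le _ _
      _ ≤ |Real.sin (k*θ)| * 1 + 1 * |Real.sin θ| := by
          rw [abs_mul, abs_mul]
          gcongr <;> exact Real.abs_cos_le_one _
      _ ≤ (k:ℝ) * |Real.sin θ| + 1 * |Real.sin θ| := by
          rw [mul_one]
          gcongr
      _ = ((k:ℝ)+1) * |Real.sin θ| := by ring

lemma abs_U_le (k : ℕ) {x : ℝ} (hx : x ∈ Set.Ioo (-1:ℝ) 1) :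
    |Polynomial.eval x (Polynomial.Chebyshev.U ℝ (k:ℤ))| ≤ k + 1 := by
  obtain ⟨hx1, hx2⟩ := hx
  set θ := Real.arccos x with hθ
  have hcos : Real.cos θ = x := Real.cos_arccos hx1.le hx2.le
  have hsin : 0 < Real.sin θ := by
    rw [hθ, Real.sin_arccos]
    apply Real.sqrt_pos.mpr
    nlinarith
  have key := Polynomial.Chebyshev.U_real_cos θ (k:ℤ)
  rw [hcos] at key
  have h1 : |Polynomial.eval x (Polynomial.Chebyshev.U ℝ (k:ℤ))| * Real.sin θ
      ≤ ((k:ℝ) + 1) * Real.sin θ := by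
    rw [← abs_of_pos hsin, ← abs_mul, key]
    have h5 := abs_sin_nat_mul (k+1) θ
    push_cast at h5 ⊢
    rw [abs_of_pos hsin] at h5 ⊢
    convert h5 using 2
  have := le_of_mul_le_mul_right h1 hsin
  exact_mod_cast this

lemma psum {z w y : ℂ} {u : ℕ → ℂ} (u0 : u 0 = 1) (u1 : u 1 = y)
    (hrec : ∀ k, u (k+2) = y * u (k+1) - u k) (hq : w^2 + 1 = z*w) :
    ∀ N : ℕ, (z - y) * (∑ k ∈ Finset.range (N+1), w^(k+1) * u k)
      = 1 - w^(N+1) * u (N+1) + w^(N+2) * u N := by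
  intro N
  induction N with
  | zero => simp [u0, u1]; linear_combination -hq
  | succ N ih =>
    rw [Finset.sum_range_succ, mul_add, ih, hrec N]
    linear_combination (-(w^(N+1) * u (N+1))) * hq

lemma summable_aux {r : ℝ} (hr : 0 ≤ r) (hr1 : r < 1) :
    Summable (fun k : ℕ => ((k:ℝ)+1) * r^(k+1)) := by
  have h1 : Summable (fun k : ℕ => (k:ℝ) * r^k) := by
    have := summable_pow_mul_geometric_of_norm_lt_one (R := ℝ) 1 (r := r)
      (by rwa [Real.norm_eq_abs, abs_of_nonneg hr])
    simpa using this
  have h2 : Summable (fun k : ℕ => r^k) := summable_geometric_of_lt_one hr hr1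
  have h3 := (h1.add h2).mul_left r
  apply h3.congr
  intro k
  ring

lemma hasSum_gen {z : ℂ} (hz : 0 < z.im) {y : ℝ} (hy : y ∈ Set.Ioo (-2:ℝ) 2) :
    HasSum (fun k : ℕ => wz z ^ (k+1) *
      ((Polynomial.eval (y/2) (Polynomial.Chebyshev.U ℝ (k:ℤ)) : ℝ) : ℂ))
      (z - (y:ℂ))⁻¹ := by
  set w := wz z with hwdef
  have hw : ‖w‖ < 1 := abs_wz_lt_one hz
  have hw0 : (0:ℝ) ≤ ‖w‖ := norm_nonneg w
  set u : ℕ → ℂ := fun k => ((Polynomial.eval (y/2) (Polynomial.Chebyshev.U ℝ (k:ℤ)) : ℝ) : ℂ) with hu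
  have hx : y/2 ∈ Set.Ioo (-1:ℝ) 1 := by
    constructor <;> [linarith [hy.1]; linarith [hy.2]]
  have hub : ∀ k : ℕ, ‖u k‖ ≤ (k:ℝ) + 1 := by
    intro k
    rw [hu]
    simp only [Complex.norm_real, Real.norm_eq_abs]
    exact_mod_cast abs_U_le k hx
  have u0 : u 0 = 1 := by simp [hu, Polynomial.Chebyshev.U_zero]
  have u1 : u 1 = (y:ℂ) := by
    simp [hu, Polynomial.Chebyshev.U_one]
    push_cast
    ring
  have hrec : ∀ k : ℕ, u (k+2) = (y:ℂ) * u (k+1) - u k := by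
    intro k
    have hR : Polynomial.eval (y/2) (Polynomial.Chebyshev.U ℝ ((k:ℤ)+2))
        = y * Polynomial.eval (y/2) (Polynomial.Chebyshev.U ℝ ((k:ℤ)+1))
          - Polynomial.eval (y/2) (Polynomial.Chebyshev.U ℝ (k:ℤ)) := by
      rw [Polynomial.Chebyshev.U_add_two]
      rw [Polynomial.eval_sub, Polynomial.eval_mul, Polynomial.eval_mul, Polynomial.eval_X]
      simp only [Polynomial.eval_ofNat]
      ring
    have hc2 : ((k+2:ℕ):ℤ) = (k:ℤ)+2 := by push_cast; ring
    have hc1 : ((k+1:ℕ):ℤ) = (k:ℤ)+1 := by push_cast; ring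
    simp only [hu, hc1, hc2, hR]
    push_cast
    ring
  -- summability
  have hnorm : ∀ k : ℕ, ‖w^(k+1) * u k‖ ≤ ((k:ℝ)+1) * (‖w‖)^(k+1) := by
    intro k
    rw [norm_mul, norm_pow]
    calc ‖w‖^(k+1) * ‖u k‖ ≤ ‖w‖^(k+1) * ((k:ℝ)+1) := by
          gcongr
          exact hub k
      _ = ((k:ℝ)+1) * (‖w‖)^(k+1) := by ring
  have hsummable : Summable (fun k : ℕ => w^(k+1) * u k) :=
    Summable.of_norm_bounded (summable_aux hw0 hw) hnorm
  -- limit of partial sums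
  have hzy : z - (y:ℂ) ≠ 0 := by
    intro h
    have : (z - (y:ℂ)).im = 0 := by rw [h]; simp
    simp only [Complex.sub_im, Complex.ofReal_im, sub_zero] at this
    linarith
  have hq : w^2 + 1 = z * w := wz_quadratic z
  have hkey := psum u0 u1 hrec hq
  have htend0 : Tendsto (fun N : ℕ => ((N:ℝ)+1) * (‖w‖)^(N+1)) atTop (nhds 0) :=
    (summable_aux hw0 hw).tendsto_atTop_zero
  have htendgeo : Tendsto (fun N : ℕ => (‖w‖)^(N+1)) atTop (nhds 0) := by
    have := tendsto_pow_atTop_nhds_zero_of_norm_lt_one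
      (x := ‖w‖) (by rwa [Real.norm_eq_abs, abs_of_nonneg hw0])
    exact this.comp (tendsto_add_atTop_nat 1)
  have hgt : Tendsto (fun N : ℕ => ((N:ℝ)+2) * (‖w‖)^(N+1)) atTop (nhds 0) := by
    have h := htend0.add htendgeo
    rw [add_zero] at h
    apply h.congr
    intro N
    ring
  have ha : Tendsto (fun N : ℕ => w^(N+1) * u (N+1)) atTop (nhds 0) := by
    apply squeeze_zero_norm ?_ hgt
    intro N
    rw [norm_mul, norm_pow]
    calc (‖w‖)^(N+1) * ‖u (N+1)‖
        ≤ (‖w‖)^(N+1) * (((N+1):ℝ)+1) := by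
          gcongr
          exact_mod_cast hub (N+1)
      _ = ((N:ℝ)+2) * (‖w‖)^(N+1) := by push_cast; ring
  have hb : Tendsto (fun N : ℕ => w^(N+2) * u N) atTop (nhds 0) := by
    apply squeeze_zero_norm ?_ (by simpa using htend0.mul_const (‖w‖) :
      Tendsto (fun N : ℕ => (((N:ℝ)+1) * (‖w‖)^(N+1)) * ‖w‖) atTop (nhds 0))
    intro N
    rw [norm_mul, norm_pow]
    calc (‖w‖)^(N+2) * ‖u N‖
        ≤ (‖w‖)^(N+2) * ((N:ℝ)+1) := by
          gcongr
          exact hub N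
      _ = (((N:ℝ)+1) * (‖w‖)^(N+1)) * ‖w‖ := by ring
  have htendP : Tendsto (fun N : ℕ => ∑ k ∈ Finset.range N, w^(k+1) * u k) atTop
      (nhds ((z - (y:ℂ))⁻¹)) := by
    rw [← Filter.tendsto_add_atTop_iff_nat 1]
    have heq : (fun N : ℕ => ∑ k ∈ Finset.range (N+1), w^(k+1) * u k)
        = fun N : ℕ => (z - (y:ℂ))⁻¹ * (1 - w^(N+1) * u (N+1) + w^(N+2) * u N) := by
      funext N
      rw [← hkey N, ← mul_assoc, inv_mul_cancel₀ hzy, one_mul]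
    rw [heq]
    have : Tendsto (fun N : ℕ => 1 - w^(N+1) * u (N+1) + w^(N+2) * u N) atTop (nhds 1) := by
      have := (tendsto_const_nhds (x := (1:ℂ)) (f := atTop)).sub ha |>.add hb
      simpa using this
    have h2 := this.const_mul ((z - (y:ℂ))⁻¹)
    simpa using h2
  have hP := hsummable.hasSum
  have := hP.tendsto_sum_nat
  have heq := tendsto_nhds_unique this htendP
  rwa [heq] at hP

lemma integral_cos_int_mul (m : ℤ) :
    ∫ θ in (0:ℝ)..π, Real.cos (m * θ) = if m = 0 then π else 0 := by
  by_cases hm : m = 0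
  · simp [hm]
  · rw [if_neg hm]
    have hm' : (m:ℝ) ≠ 0 := Int.cast_ne_zero.mpr hm
    rw [intervalIntegral.integral_comp_mul_left (fun x => Real.cos x) hm']
    simp [integral_cos]

lemma integral_sin_mul_sin (a b : ℕ) :
    ∫ θ in (0:ℝ)..π, Real.sin ((a+1) * θ) * Real.sin ((b+1) * θ)
      = if a = b then π/2 else 0 := by
  have key : ∀ θ : ℝ, Real.sin ((a+1) * θ) * Real.sin ((b+1) * θ)
      = (Real.cos ((((a:ℤ) - b) : ℤ) * θ) - Real.cos ((((a:ℤ) + b + 2) : ℤ) * θ)) / 2 := by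
    intro θ
    have h1 := Real.cos_sub ((a+1) * θ) ((b+1) * θ)
    have h2 := Real.cos_add ((a+1) * θ) ((b+1) * θ)
    have e1 : ((((a:ℤ) - b) : ℤ) : ℝ) * θ = (a+1) * θ - (b+1) * θ := by push_cast; ring
    have e2 : ((((a:ℤ) + b + 2) : ℤ) : ℝ) * θ = (a+1) * θ + (b+1) * θ := by push_cast; ring
    rw [e1, e2, h1, h2]
    ring
  simp_rw [key]
  rw [intervalIntegral.integral_div, intervalIntegral.integral_sub]
  · rw [integral_cos_int_mul, integral_cos_int_mul]
    have h2 : ¬ ((a:ℤ) + b + 2 = 0) := by omega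
    rw [if_neg h2]
    by_cases hab : a = b
    · rw [if_pos hab, if_pos (by omega : (a:ℤ) - b = 0)]
      norm_num
    · rw [if_neg hab, if_neg (by omega : ¬ ((a:ℤ) - b = 0))]
      norm_num
  · apply Continuous.intervalIntegrable; continuity
  · apply Continuous.intervalIntegrable; continuity

lemma orth (n k : ℕ) :
    ∫ y in Set.Ioo (-2:ℝ) 2,
        Polynomial.eval (y/2) (Polynomial.Chebyshev.U ℝ (n:ℤ))
          * Polynomial.eval (y/2) (Polynomial.Chebyshev.U ℝ (k:ℤ))
          * Real.sqrt (4 - y^2)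
      = if n = k then 2*π else 0 := by
  set g : ℝ → ℝ := fun y => Polynomial.eval (y/2) (Polynomial.Chebyshev.U ℝ (n:ℤ))
      * Polynomial.eval (y/2) (Polynomial.Chebyshev.U ℝ (k:ℤ)) * Real.sqrt (4 - y^2) with hg
  have hgc : Continuous g := by
    apply Continuous.mul
    · apply Continuous.mul <;> exact (Polynomial.continuous _).comp (by continuity)
    · exact Real.continuous_sqrt.comp (by continuity)
  -- set integral to interval integral
  have h1 : ∫ y in Set.Ioo (-2:ℝ) 2, g y = ∫ y in (-2:ℝ)..2, g y := by
    rw [intervalIntegral.integral_of_le (by norm_num : (-2:ℝ) ≤ 2),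
      MeasureTheory.integral_Ioc_eq_integral_Ioo]
  -- change of variables
  have h2 : ∫ θ in (0:ℝ)..π, (-2 * Real.sin θ) • g (2 * Real.cos θ)
      = ∫ y in (2:ℝ)..(-2:ℝ), g y := by
    have := intervalIntegral.integral_comp_smul_deriv
      (a := 0) (b := π) (f := fun θ => 2 * Real.cos θ) (f' := fun θ => -2 * Real.sin θ)
      (g := g) ?_ ?_ hgc
    · simpa using this
    · intro x _
      have : HasDerivAt (fun θ => 2 * Real.cos θ) (2 * (-Real.sin x)) x :=
        (Real.hasDerivAt_cos x).const_mul 2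
      convert this using 1; ring
    · exact (continuous_const.mul Real.continuous_sin).continuousOn
  -- integrand on [0, π]
  have h3 : ∀ θ ∈ Set.uIcc (0:ℝ) π, (-2 * Real.sin θ) • g (2 * Real.cos θ)
      = -4 * (Real.sin ((n+1) * θ) * Real.sin ((k+1) * θ)) := by
    intro θ hθ
    rw [Set.uIcc_of_le Real.pi_pos.le] at hθ
    have hsθ : 0 ≤ Real.sin θ := Real.sin_nonneg_of_mem_Icc hθ
    have hsqrt : Real.sqrt (4 - (2 * Real.cos θ)^2) = 2 * Real.sin θ := by
      have : 4 - (2 * Real.cos θ)^2 = (2 * Real.sin θ)^2 := by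
        have := Real.sin_sq_add_cos_sq θ
        nlinarith
      rw [this, Real.sqrt_sq (by positivity)]
    have hUn := Polynomial.Chebyshev.U_real_cos θ (n:ℤ)
    have hUk := Polynomial.Chebyshev.U_real_cos θ (k:ℤ)
    rw [hg]
    simp only [smul_eq_mul]
    have harg : (2 : ℝ) * Real.cos θ / 2 = Real.cos θ := by ring
    rw [harg, hsqrt]
    have e1 : ((n:ℤ):ℝ) + 1 = (n:ℝ) + 1 := by push_cast; ring
    rw [e1] at hUn
    have e2 : ((k:ℤ):ℝ) + 1 = (k:ℝ) + 1 := by push_cast; ring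
    rw [e2] at hUk
    calc -2 * Real.sin θ * (Polynomial.eval (Real.cos θ) (Polynomial.Chebyshev.U ℝ (n:ℤ))
          * Polynomial.eval (Real.cos θ) (Polynomial.Chebyshev.U ℝ (k:ℤ)) * (2 * Real.sin θ))
        = -4 * ((Polynomial.eval (Real.cos θ) (Polynomial.Chebyshev.U ℝ (n:ℤ)) * Real.sin θ)
            * (Polynomial.eval (Real.cos θ) (Polynomial.Chebyshev.U ℝ (k:ℤ)) * Real.sin θ)) := by
          ring
      _ = -4 * (Real.sin ((n+1) * θ) * Real.sin ((k+1) * θ)) := by rw [hUn, hUk]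
  have h4 : ∫ θ in (0:ℝ)..π, (-2 * Real.sin θ) • g (2 * Real.cos θ)
      = -4 * ∫ θ in (0:ℝ)..π, Real.sin ((n+1) * θ) * Real.sin ((k+1) * θ) := by
    rw [intervalIntegral.integral_congr h3]
    rw [intervalIntegral.integral_const_mul]
  rw [h1, show (∫ y in (-2:ℝ)..2, g y) = -(∫ y in (2:ℝ)..(-2:ℝ), g y) from
    (intervalIntegral.integral_symm _ _), ← h2, h4, integral_sin_mul_sin]
  by_cases hnk : n = k <;> simp [hnk] <;> ring

end SemicircleAux

open SemicircleAux

/-- Semicircle-weighted Cauchy transform of Chebyshev polynomials of the second kind. -/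
theorem chebyshevU_semicircle_transform (n : ℕ) (z : ℂ) (hz : 0 < z.im) :
    (2 : ℂ) * ∫ y in Set.Ioo (-2 : ℝ) 2,
        ((Polynomial.eval (y / 2) (Polynomial.Chebyshev.U ℝ (n : ℤ)) : ℝ) : ℂ) *
          (rhoSC y : ℂ) / (z - (y : ℂ))
      = 2 * ((z - sqrtD z) / 2) ^ (n + 1) := by
  have hw : ‖wz z‖ < 1 := abs_wz_lt_one hz
  have hw0 : (0:ℝ) ≤ ‖wz z‖ := norm_nonneg _
  set w := wz z with hwdef
  -- notation
  set u : ℕ → ℝ → ℝ := fun k y => Polynomial.eval (y/2) (Polynomial.Chebyshev.U ℝ (k:ℤ))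
    with hu
  set G : ℕ → ℝ → ℝ := fun k y => u n y * u k y * rhoSC y with hG
  set F : ℕ → ℝ → ℂ := fun k y => w^(k+1) * ((G k y : ℝ) : ℂ) with hF
  have hbound : ∀ k : ℕ, ∀ y ∈ Set.Ioo (-2:ℝ) 2,
      ‖F k y‖ ≤ (‖w‖)^(k+1) * (((n:ℝ)+1) * (((k:ℝ)+1) / π)) := by
    intro k y hy
    have hx : y/2 ∈ Set.Ioo (-1:ℝ) 1 := ⟨by linarith [hy.1], by linarith [hy.2]⟩
    have hun : |u n y| ≤ (n:ℝ)+1 := by exact_mod_cast abs_U_le n hx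
    have huk : |u k y| ≤ (k:ℝ)+1 := by exact_mod_cast abs_U_le k hx
    have hrho : |rhoSC y| ≤ 1/π := by
      rw [rhoSC, if_pos hy, abs_of_nonneg (by positivity)]
      rw [div_le_div_iff₀ (by positivity) Real.pi_pos]
      have h4 : Real.sqrt (4 - y^2) ≤ 2 := by
        rw [show (2:ℝ) = Real.sqrt 4 by rw [show (4:ℝ) = 2^2 by norm_num, Real.sqrt_sq]; norm_num]
        apply Real.sqrt_le_sqrt
        nlinarith [hy.1, hy.2]
      nlinarith [Real.pi_pos]
    rw [hF]
    simp only [norm_mul, norm_pow, Complex.norm_real, Real.norm_eq_abs]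
    have : |G k y| ≤ ((n:ℝ)+1) * (((k:ℝ)+1) / π) := by
      rw [hG]
      simp only [abs_mul]
      calc |u n y| * |u k y| * |rhoSC y| ≤ (((n:ℝ)+1) * ((k:ℝ)+1)) * (1/π) := by
            apply mul_le_mul (mul_le_mul hun huk (abs_nonneg _) (by positivity)) hrho
              (abs_nonneg _) (by positivity)
        _ = ((n:ℝ)+1) * (((k:ℝ)+1) / π) := by ring
    gcongr
  -- integrability
  have hGint : ∀ k : ℕ, IntegrableOn (G k) (Set.Ioo (-2:ℝ) 2) := by
    intro k
    have hH : Continuous (fun y => u n y * u k y * (Real.sqrt (4 - y^2) / (2*π))) := by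
      apply Continuous.mul
      · exact ((Polynomial.continuous _).comp (by continuity)).mul
          ((Polynomial.continuous _).comp (by continuity))
      · exact (Real.continuous_sqrt.comp (by continuity)).div_const _
    have h1 : IntegrableOn (fun y => u n y * u k y * (Real.sqrt (4 - y^2) / (2*π)))
        (Set.Ioo (-2:ℝ) 2) :=
      (hH.integrableOn_Icc (a := -2) (b := 2)).mono_set Set.Ioo_subset_Icc_self
    apply h1.congr_fun ?_ measurableSet_Ioo
    intro y hy
    rw [hG]
    simp only
    rw [rhoSC, if_pos hy]
  have hFint : ∀ k : ℕ, IntegrableOn (F k) (Set.Ioo (-2:ℝ) 2) := by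
    intro k
    exact ((hGint k).ofReal.const_mul _)
  -- bound on integrals of norms
  have hnormint : ∀ k : ℕ, (∫ y in Set.Ioo (-2:ℝ) 2, ‖F k y‖)
      ≤ (‖w‖)^(k+1) * (((n:ℝ)+1) * (((k:ℝ)+1) / π)) * 4 := by
    intro k
    have h1 : (∫ y in Set.Ioo (-2:ℝ) 2, ‖F k y‖)
        ≤ ∫ _y in Set.Ioo (-2:ℝ) 2, (‖w‖)^(k+1) * (((n:ℝ)+1) * (((k:ℝ)+1) / π)) := by
      apply setIntegral_mono_on (hFint k).norm (integrableOn_const ?_) measurableSet_Ioo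
      · exact hbound k
      · rw [Real.volume_Ioo]; exact ENNReal.ofReal_ne_top
    rw [setIntegral_const] at h1
    rw [measureReal_def, Real.volume_Ioo] at h1
    have : (ENNReal.ofReal ((2:ℝ) - (-2))).toReal = 4 := by
      rw [ENNReal.toReal_ofReal (by norm_num)]; norm_num
    rw [this] at h1
    calc (∫ y in Set.Ioo (-2:ℝ) 2, ‖F k y‖)
        ≤ 4 • ((‖w‖)^(k+1) * (((n:ℝ)+1) * (((k:ℝ)+1) / π))) := h1
      _ = (‖w‖)^(k+1) * (((n:ℝ)+1) * (((k:ℝ)+1) / π)) * 4 := by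
          rw [smul_eq_mul]; ring
  have hsumnorm : Summable (fun k : ℕ => ∫ y in Set.Ioo (-2:ℝ) 2, ‖F k y‖) := by
    apply Summable.of_nonneg_of_le
      (fun k => integral_nonneg (fun y => norm_nonneg _)) hnormint
    have h2 := (summable_aux hw0 hw).mul_left (((n:ℝ)+1) * (1/π) * 4)
    apply h2.congr
    intro k
    ring
  -- interchange
  have hswap := MeasureTheory.hasSum_integral_of_summable_integral_norm
    (μ := volume.restrict (Set.Ioo (-2:ℝ) 2)) (F := F) hFint hsumnorm
  -- identify pointwise sum
  have hptwise : ∫ y in Set.Ioo (-2:ℝ) 2, (∑' k, F k y)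
      = ∫ y in Set.Ioo (-2 : ℝ) 2,
        ((Polynomial.eval (y / 2) (Polynomial.Chebyshev.U ℝ (n : ℤ)) : ℝ) : ℂ) *
          (rhoSC y : ℂ) / (z - (y : ℂ)) := by
    apply setIntegral_congr_fun measurableSet_Ioo
    intro y hy
    simp only
    have hgen := hasSum_gen hz hy
    have hmul := hgen.mul_left (((u n y * rhoSC y : ℝ) : ℂ))
    have heqf : (fun k : ℕ => ((u n y * rhoSC y : ℝ) : ℂ)
        * (wz z ^ (k+1) * ((Polynomial.eval (y/2) (Polynomial.Chebyshev.U ℝ (k:ℤ)) : ℝ) : ℂ)))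
        = fun k => F k y := by
      funext k
      simp only [hF, hG, hu, ← hwdef]
      push_cast
      ring
    rw [heqf] at hmul
    rw [hmul.tsum_eq]
    simp only [hu]
    push_cast
    ring
  -- termwise integral values
  have hterm : ∀ k : ℕ, (∫ y in Set.Ioo (-2:ℝ) 2, F k y)
      = if k = n then w^(n+1) else 0 := by
    intro k
    rw [hF]
    simp only
    rw [MeasureTheory.integral_const_mul,
      show (∫ a in Set.Ioo (-2:ℝ) 2, ((G k a : ℝ):ℂ)) = ((∫ a in Set.Ioo (-2:ℝ) 2, G k a : ℝ):ℂ)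
        from integral_ofReal (𝕜 := ℂ)]
    have hGval : (∫ y in Set.Ioo (-2:ℝ) 2, G k y) = if n = k then 1 else 0 := by
      have h1 : (∫ y in Set.Ioo (-2:ℝ) 2, G k y)
          = ∫ y in Set.Ioo (-2:ℝ) 2, u n y * u k y * Real.sqrt (4 - y^2) / (2*π) := by
        apply setIntegral_congr_fun measurableSet_Ioo
        intro y hy
        rw [hG]
        simp only
        rw [rhoSC, if_pos hy]
        ring
      rw [h1, integral_div, orth n k]
      by_cases hnk : n = k
      · rw [if_pos hnk, if_pos hnk]
        field_simp
      · rw [if_neg hnk, if_neg hnk, zero_div]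
    rw [hGval]
    by_cases hkn : k = n
    · rw [if_pos hkn, if_pos hkn.symm, hkn]
      simp
    · rw [if_neg hkn, if_neg (fun h => hkn h.symm)]
      simp
  -- conclude
  have heqint : (fun k : ℕ => ∫ y in Set.Ioo (-2:ℝ) 2, F k y)
      = fun k : ℕ => if k = n then w^(n+1) else 0 := funext hterm
  rw [show (∫ a in Set.Ioo (-2:ℝ) 2, F · a) = (fun k : ℕ => ∫ y in Set.Ioo (-2:ℝ) 2, F k y)
    from rfl] at hswap
  rw [heqint] at hswap
  have hsingle : HasSum (fun k : ℕ => if k = n then w^(n+1) else 0) (w^(n+1)) :=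
    hasSum_ite_eq n _
  have hval : (∫ y in Set.Ioo (-2:ℝ) 2, (∑' k, F k y)) = w^(n+1) :=
    (hswap.unique hsingle)
  rw [← hptwise, hval, hwdef]
  rfl

end
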